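/- Quasi-submultiplicativity of geometric-time distance: for a finite irreducible Markov chain, d̄_G(2t) ≤ (1/2)·d̄_G(t)·(1 + d̄_G(t)). Consequently, if d̄_G(t) ≤ β < 1 then d̄_G(2^k t) ≤ ((1+β)/2)^k · d̄_G(t) for all k ∈ ℕ. -/

import Mathlib

open scoped BigOperators ENNReal

noncomputable section

/-- Total variation distance between two distributions on a finite set,
as half the `ℓ¹` distance. -/
def tv {S : Type*} [Fintype S] (μ ν : S → ℝ) : ℝ := (1 / 2) * ∑ y, |μ y - ν y|

/-- Law of the chain with transition matrix `P` started at `x`, evaluated at an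
independent random time with distribution `T` on ℕ. -/
def lawAt {S : Type*} [Fintype S] [DecidableEq S] (P : Matrix S S ℝ) (T : ℕ → ℝ)
    (x : S) : S → ℝ :=
  fun y => ∑' n, T n * (P ^ n) x y

/-- The geometric distribution on `{1,2,...}` with mean `t` (success probability `1/t`). -/
def geo (t : ℕ) : ℕ → ℝ :=
  fun n => if n = 0 then 0 else (1 / (t : ℝ)) * (1 - 1 / (t : ℝ)) ^ (n - 1)

/-- `d̄_G(t) = max_{x,y} ‖ℙ_x(X_{Z_t} ∈ ·) − ℙ_y(X_{Z_t} ∈ ·)‖` for an independent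
geometric time `Z_t` of mean `t`. -/
def dbarG {S : Type*} [Fintype S] [DecidableEq S] (P : Matrix S S ℝ) (t : ℕ) : ℝ :=
  ⨆ x, ⨆ y, tv (lawAt P (geo t) x) (lawAt P (geo t) y)

set_option linter.unusedSectionVars false

section aux
variable {S : Type*} [Fintype S] [DecidableEq S]
variable {P : Matrix S S ℝ}

lemma pow_entry_nonneg (hP0 : ∀ x y, 0 ≤ P x y) : ∀ n x y, 0 ≤ (P ^ n) x y := by
  intro n
  induction n with
  | zero =>
    intro x y
    rw [pow_zero, Matrix.one_apply]
    split <;> norm_num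
  | succ n ih =>
    intro x y
    rw [pow_succ, Matrix.mul_apply]
    exact Finset.sum_nonneg fun z _ => mul_nonneg (ih x z) (hP0 z y)

lemma pow_rowsum (hP1 : ∀ x, ∑ y, P x y = 1) : ∀ n x, ∑ y, (P ^ n) x y = 1 := by
  intro n
  induction n with
  | zero => intro x; simp [Matrix.one_apply]
  | succ n ih =>
    intro x
    simp only [pow_succ, Matrix.mul_apply]
    rw [Finset.sum_comm]
    have h : ∀ z, ∑ y, (P ^ n) x z * P z y = (P ^ n) x z := by
      intro z; rw [← Finset.mul_sum, hP1 z, mul_one]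
    rw [Finset.sum_congr rfl fun z _ => h z]
    exact ih x


lemma pow_entry_le_one (hP0 : ∀ x y, 0 ≤ P x y) (hP1 : ∀ x, ∑ y, P x y = 1) :
    ∀ n x y, (P ^ n) x y ≤ 1 := by
  intro n x y
  calc (P ^ n) x y ≤ ∑ z, (P ^ n) x z :=
        Finset.single_le_sum (fun z _ => pow_entry_nonneg hP0 n x z) (Finset.mem_univ y)
    _ = 1 := pow_rowsum hP1 n x

end aux

section geo
variable {t : ℕ} (ht : 1 ≤ t)
include ht

lemma ha0 : (0:ℝ) ≤ 1 - 1 / (t : ℝ) := by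
  have h1 : (1:ℝ) ≤ (t:ℝ) := by exact_mod_cast ht
  have : 1 / (t:ℝ) ≤ 1 := by
    rw [div_le_one (by linarith)]; exact h1
  linarith

lemma ha1 : 1 - 1 / (t : ℝ) < 1 := by
  have h1 : (1:ℝ) ≤ (t:ℝ) := by exact_mod_cast ht
  have : 0 < 1 / (t:ℝ) := by positivity
  linarith

lemma geo_nonneg : ∀ n, 0 ≤ geo t n := by
  intro n
  unfold geo
  split
  · exact le_refl 0
  · exact mul_nonneg (by positivity) (pow_nonneg (ha0 ht) _)

omit ht in
lemma geo_succ (m : ℕ) : geo t (m + 1) = (1 / (t:ℝ)) * (1 - 1 / (t:ℝ)) ^ m := by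
  simp [geo]

lemma geo_shift_hasSum : HasSum (fun m => geo t (m + 1)) 1 := by
  have h := hasSum_geometric_of_lt_one (ha0 ht) (ha1 ht)
  have h2 := h.mul_left (1 / (t:ℝ))
  have ht0 : (t:ℝ) ≠ 0 := by positivity
  have : (1 / (t:ℝ)) * (1 - (1 - 1 / (t:ℝ)))⁻¹ = 1 := by
    field_simp
    ring
  rw [this] at h2
  simpa only [geo_succ] using h2

lemma geo_hasSum : HasSum (geo t) 1 := by
  have h : HasSum (fun n => geo t (n + 1)) 1 := geo_shift_hasSum ht
  have h2 := (hasSum_nat_add_iff (f := geo t) (g := (1:ℝ)) 1).mp h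
  simpa [geo] using h2

lemma geo_summable : Summable (geo t) := (geo_hasSum ht).summable

end geo

section law
variable {S : Type*} [Fintype S] [DecidableEq S]
variable {P : Matrix S S ℝ} (hP0 : ∀ x y, 0 ≤ P x y) (hP1 : ∀ x, ∑ y, P x y = 1)
variable {t : ℕ} (ht : 1 ≤ t)
include hP0 hP1 ht

lemma law_summable (x y : S) : Summable (fun n => geo t n * (P ^ n) x y) :=
  Summable.of_nonneg_of_le
    (fun n => mul_nonneg (geo_nonneg ht n) (pow_entry_nonneg hP0 n x y))
    (fun n => mul_le_of_le_one_right (geo_nonneg ht n) (pow_entry_le_one hP0 hP1 n x y))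
    (geo_summable ht)

lemma law_nonneg (x y : S) : 0 ≤ lawAt P (geo t) x y :=
  tsum_nonneg fun n => mul_nonneg (geo_nonneg ht n) (pow_entry_nonneg hP0 n x y)

lemma law_rowsum (x : S) : ∑ y, lawAt P (geo t) x y = 1 := by
  unfold lawAt
  rw [← Summable.tsum_finsetSum (fun y _ => law_summable hP0 hP1 ht x y)]
  have h : ∀ n : ℕ, ∑ y, geo t n * (P ^ n) x y = geo t n := by
    intro n; rw [← Finset.mul_sum, pow_rowsum hP1 n x, mul_one]
  rw [tsum_congr h]
  exact (geo_hasSum ht).tsum_eq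

lemma law_shift (x y : S) :
    lawAt P (geo t) x y = ∑' m, 1 / (t:ℝ) * (1 - 1/(t:ℝ)) ^ m * (P ^ (m+1)) x y := by
  unfold lawAt
  rw [Summable.tsum_eq_zero_add (law_summable hP0 hP1 ht x y)]
  simp [geo_succ, geo]

lemma law_shift_summable (x y : S) :
    Summable (fun m => 1 / (t:ℝ) * (1 - 1/(t:ℝ)) ^ m * (P ^ (m+1)) x y) := by
  refine Summable.of_nonneg_of_le
    (fun m => mul_nonneg (mul_nonneg (by positivity) (pow_nonneg (ha0 ht) m))
      (pow_entry_nonneg hP0 (m+1) x y))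
    (fun m => mul_le_of_le_one_right
      (mul_nonneg (by positivity) (pow_nonneg (ha0 ht) m))
      (pow_entry_le_one hP0 hP1 (m+1) x y))
    ((summable_geometric_of_lt_one (ha0 ht) (ha1 ht)).mul_left _)

lemma law_rec (x y : S) :
    lawAt P (geo t) x y
      = 1/(t:ℝ) * P x y + (1 - 1/(t:ℝ)) * ∑ z, lawAt P (geo t) x z * P z y := by
  rw [law_shift hP0 hP1 ht]
  rw [Summable.tsum_eq_zero_add (law_shift_summable hP0 hP1 ht x y)]
  congr 1
  · simp
  · have h1 : ∀ m : ℕ, 1/(t:ℝ) * (1 - 1/(t:ℝ)) ^ (m+1) * (P ^ (m+1+1)) x y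
        = ∑ z, (1 - 1/(t:ℝ)) * ((1/(t:ℝ) * (1 - 1/(t:ℝ)) ^ m * (P ^ (m+1)) x z) * P z y) := by
      intro m
      rw [pow_succ P (m+1), Matrix.mul_apply, Finset.mul_sum]
      exact Finset.sum_congr rfl fun z _ => by ring
    rw [tsum_congr h1]
    rw [Summable.tsum_finsetSum (fun z _ =>
      (((law_shift_summable hP0 hP1 ht x z).mul_right (P z y)).mul_left _))]
    rw [Finset.mul_sum]
    refine Finset.sum_congr rfl fun z _ => ?_
    rw [tsum_mul_left, tsum_mul_right, ← law_shift hP0 hP1 ht]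

end law

section key
variable {S : Type*} [Fintype S] [DecidableEq S]
variable {P : Matrix S S ℝ} (hP0 : ∀ x y, 0 ≤ P x y) (hP1 : ∀ x, ∑ y, P x y = 1)
variable {t : ℕ} (ht : 1 ≤ t)
include hP0 hP1 ht

lemma key_identity (x y : S) :
    lawAt P (geo (2*t)) x y = (1/2) * lawAt P (geo t) x y
      + (1/2) * ∑ z, lawAt P (geo t) x z * lawAt P (geo (2*t)) z y := by
  have ht2 : 1 ≤ 2*t := by omega
  set M1 : S → S → ℝ := fun x y => lawAt P (geo t) x y with hM1
  set M2 : S → S → ℝ := fun x y => lawAt P (geo (2*t)) x y with hM2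
  set p : ℝ := 1/(t:ℝ) with hp
  set q : ℝ := 1/(((2*t : ℕ)):ℝ) with hq
  set a : ℝ := 1 - 1/(t:ℝ) with haa
  set b : ℝ := 1 - 1/(((2*t : ℕ)):ℝ) with hbb
  have ht0 : (t:ℝ) ≠ 0 := by
    have : (1:ℝ) ≤ (t:ℝ) := by exact_mod_cast ht
    linarith
  have hcast : (((2*t : ℕ)):ℝ) = 2 * (t:ℝ) := by push_cast; ring
  have hpq : p = 2*q := by rw [hp, hq, hcast]; field_simp
  have hab : a = b - q := by rw [haa, hbb, hq, hcast]; field_simp; ring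
  have hb0 : 0 ≤ b := ha0 ht2
  have hb1 : b < 1 := ha1 ht2
  set X : S → S → ℝ := fun x y =>
    (1/2) * M1 x y + (1/2) * ∑ z, M1 x z * M2 z y - M2 x y with hX
  have hXrec : ∀ x y, X x y = b * ∑ z, X x z * P z y := by
    intro x y
    have e1 : M1 x y = p * P x y + a * ∑ z, M1 x z * P z y :=
      law_rec hP0 hP1 ht x y
    have e2 : M2 x y = q * P x y + b * ∑ z, M2 x z * P z y :=
      law_rec hP0 hP1 ht2 x y
    set A : ℝ := ∑ z, M1 x z * P z y with hA
    set B : ℝ := ∑ z, M2 x z * P z y with hB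
    set C : ℝ := ∑ z, ∑ w, M1 x z * (M2 z w * P w y) with hC
    have e3 : ∑ z, M1 x z * M2 z y = q * A + b * C := by
      rw [Finset.sum_congr rfl (fun z _ => by
        rw [show M2 z y = q * P z y + b * ∑ w, M2 z w * P w y from law_rec hP0 hP1 ht2 z y])]
      simp only [mul_add, Finset.sum_add_distrib]
      congr 1
      · rw [hA, Finset.mul_sum]
        exact Finset.sum_congr rfl fun z _ => by ring
      · rw [hC]
        simp only [Finset.mul_sum]
        exact Finset.sum_congr rfl fun z _ => Finset.sum_congr rfl fun w _ => by ring
    have e4 : ∑ z, (∑ w, M1 x w * M2 w z) * P z y = C := by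
      rw [hC]
      simp only [Finset.sum_mul]
      conv_lhs => rw [Finset.sum_comm]
      simp only [mul_assoc]
    have e5 : ∑ z, X x z * P z y = (1/2) * A + (1/2) * C - B := by
      have h : ∀ z, X x z * P z y
          = (1/2) * (M1 x z * P z y) + (1/2) * ((∑ w, M1 x w * M2 w z) * P z y)
            - M2 x z * P z y := by
        intro z; rw [hX]; ring
      rw [Finset.sum_congr rfl fun z _ => h z]
      rw [Finset.sum_sub_distrib, Finset.sum_add_distrib, ← Finset.mul_sum, ← Finset.mul_sum,
        e4, hA, hB]
    rw [e5]
    simp only [hX]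
    rw [e1, e2, e3]
    linear_combination (P x y / 2) * hpq + (A / 2) * hab
  have hXzero : ∀ x y, X x y = 0 := by
    have hL : ∀ x, ∑ y, |X x y| = 0 := by
      intro x
      have hL0 : 0 ≤ ∑ y, |X x y| := Finset.sum_nonneg fun y _ => abs_nonneg _
      have hLb : ∑ y, |X x y| ≤ b * ∑ y, |X x y| := by
        calc ∑ y, |X x y| = ∑ y, |b * ∑ z, X x z * P z y| :=
              Finset.sum_congr rfl fun y _ => by rw [← hXrec x y]
          _ ≤ ∑ y, b * ∑ z, |X x z| * P z y := by
              refine Finset.sum_le_sum fun y _ => ?_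
              rw [abs_mul, abs_of_nonneg hb0]
              refine mul_le_mul_of_nonneg_left ?_ hb0
              refine le_trans (Finset.abs_sum_le_sum_abs _ _) ?_
              refine le_of_eq (Finset.sum_congr rfl fun z _ => ?_)
              rw [abs_mul, abs_of_nonneg (hP0 z y)]
          _ = b * ∑ z, |X x z| * ∑ y, P z y := by
              rw [← Finset.mul_sum, Finset.sum_comm]
              congr 1
              exact Finset.sum_congr rfl fun z _ => by rw [Finset.mul_sum]
          _ = b * ∑ z, |X x z| := by
              congr 1
              exact Finset.sum_congr rfl fun z _ => by rw [hP1 z, mul_one]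
      nlinarith [hL0, hLb, hb1]
    intro x y
    have h1 : |X x y| ≤ ∑ y', |X x y'| :=
      Finset.single_le_sum (f := fun y' => |X x y'|) (fun y' _ => abs_nonneg _)
        (Finset.mem_univ y)
    have := hL x
    have h2 : |X x y| = 0 := le_antisymm (by linarith) (abs_nonneg _)
    exact abs_eq_zero.mp h2
  have := hXzero x y
  simp only [hX] at this
  simp only [hM1, hM2] at this ⊢
  linarith

end key

section tvlemmas
variable {S : Type*} [Fintype S]

lemma tv_nonneg (μ ν : S → ℝ) : 0 ≤ tv μ ν := by
  unfold tv
  have : 0 ≤ ∑ y, |μ y - ν y| := Finset.sum_nonneg fun y _ => abs_nonneg _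
  linarith

lemma tv_self (μ : S → ℝ) : tv μ μ = 0 := by simp [tv]

lemma tv_le_one (μ ν : S → ℝ) (hμ0 : ∀ y, 0 ≤ μ y) (hμ1 : ∑ y, μ y = 1)
    (hν0 : ∀ y, 0 ≤ ν y) (hν1 : ∑ y, ν y = 1) : tv μ ν ≤ 1 := by
  unfold tv
  have h : ∀ y ∈ Finset.univ, |μ y - ν y| ≤ μ y + ν y := fun y _ => by
    rw [abs_sub_le_iff]
    constructor <;> [linarith [hν0 y]; linarith [hμ0 y]]
  have := Finset.sum_le_sum h
  rw [Finset.sum_add_distrib, hμ1, hν1] at this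
  linarith

lemma tv_mix (f g f' g' : S → ℝ) :
    tv (fun y => (1/2) * f y + (1/2) * g y) (fun y => (1/2) * f' y + (1/2) * g' y)
      ≤ (1/2) * tv f f' + (1/2) * tv g g' := by
  unfold tv
  have h : ∀ y ∈ Finset.univ,
      |((1/2) * f y + (1/2) * g y) - ((1/2) * f' y + (1/2) * g' y)|
        ≤ (1/2) * |f y - f' y| + (1/2) * |g y - g' y| := by
    intro y _
    have h1 : ((1/2) * f y + (1/2) * g y) - ((1/2) * f' y + (1/2) * g' y)
        = (1/2) * (f y - f' y) + (1/2) * (g y - g' y) := by ring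
    rw [h1]
    refine le_trans (abs_add_le _ _) ?_
    have h2 : |(1:ℝ)/2| = 1/2 := by norm_num
    rw [abs_mul, abs_mul, h2]
  have := Finset.sum_le_sum h
  rw [Finset.sum_add_distrib, ← Finset.mul_sum, ← Finset.mul_sum] at this
  linarith

lemma tv_matmul [Nonempty S] (μ ν : S → ℝ) (hsum : ∑ z, μ z = ∑ z, ν z)
    (Q : S → S → ℝ) (D : ℝ) (hD : ∀ z w, tv (Q z) (Q w) ≤ D) :
    tv (fun y => ∑ z, μ z * Q z y) (fun y => ∑ z, ν z * Q z y) ≤ tv μ ν * D := by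
  have hD0 : 0 ≤ D := by
    have z0 : S := Classical.arbitrary S
    have := hD z0 z0
    rw [tv_self] at this
    exact this
  set d : S → ℝ := fun z => μ z - ν z with hd
  set dp : S → ℝ := fun z => max (d z) 0 with hdp
  set dm : S → ℝ := fun z => max (-d z) 0 with hdm
  have hdp0 : ∀ z, 0 ≤ dp z := fun z => le_max_right _ _
  have hdm0 : ∀ z, 0 ≤ dm z := fun z => le_max_right _ _
  have hsub : ∀ z, d z = dp z - dm z := by
    intro z
    simp only [hdp, hdm]
    rcases le_total 0 (d z) with h | h
    · rw [max_eq_left h, max_eq_right (neg_nonpos.mpr h)]; ring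
    · rw [max_eq_right h, max_eq_left (neg_nonneg.mpr h)]; ring
  have habs : ∀ z, |d z| = dp z + dm z := by
    intro z
    simp only [hdp, hdm]
    rcases le_total 0 (d z) with h | h
    · rw [max_eq_left h, max_eq_right (neg_nonpos.mpr h), abs_of_nonneg h]; ring
    · rw [max_eq_right h, max_eq_left (neg_nonneg.mpr h), abs_of_nonpos h]; ring
  set δ : ℝ := ∑ z, dp z with hδ
  have hδ0 : 0 ≤ δ := Finset.sum_nonneg fun z _ => hdp0 z
  have hdsum : ∑ z, d z = 0 := by
    simp only [hd]
    rw [Finset.sum_sub_distrib, hsum]; ring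
  have hδm : ∑ z, dm z = δ := by
    have h1 : ∑ z, d z = ∑ z, dp z - ∑ z, dm z := by
      rw [← Finset.sum_sub_distrib]
      exact Finset.sum_congr rfl fun z _ => hsub z
    rw [hdsum] at h1
    rw [hδ]; linarith
  have htv : tv μ ν = δ := by
    unfold tv
    rw [Finset.sum_congr rfl fun z _ => habs z, Finset.sum_add_distrib, hδm, ← hδ]
    ring
  by_cases hzero : δ = 0
  · have hdp_zero : ∀ z, dp z = 0 := by
      intro z
      have := Finset.sum_eq_zero_iff_of_nonneg (fun z _ => hdp0 z) |>.mp (hδ ▸ hzero)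
      exact this z (Finset.mem_univ z)
    have hdm_zero : ∀ z, dm z = 0 := by
      intro z
      have h0 : ∑ z, dm z = 0 := by rw [hδm, hzero]
      have := Finset.sum_eq_zero_iff_of_nonneg (fun z _ => hdm0 z) |>.mp h0
      exact this z (Finset.mem_univ z)
    have hμν : ∀ z, μ z = ν z := by
      intro z
      have := hsub z
      rw [hdp_zero z, hdm_zero z] at this
      have : d z = 0 := by linarith
      simp only [hd] at this
      linarith
    have heq : (fun y => ∑ z, μ z * Q z y) = (fun y => ∑ z, ν z * Q z y) := by
      funext y
      exact Finset.sum_congr rfl fun z _ => by rw [hμν z]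
    rw [heq, tv_self, htv, hzero]
    simp
  · have hδpos : 0 < δ := lt_of_le_of_ne hδ0 (Ne.symm hzero)
    have hkey : ∀ y, δ * (∑ z, μ z * Q z y - ∑ z, ν z * Q z y)
        = ∑ z, ∑ w, dp z * dm w * (Q z y - Q w y) := by
      intro y
      have h1 : ∑ z, ∑ w, dp z * dm w * Q z y = δ * ∑ z, dp z * Q z y := by
        have hin : ∀ z ∈ Finset.univ, ∑ w, dp z * dm w * Q z y = (dp z * Q z y) * δ := by
          intro z _
          rw [← hδm, Finset.mul_sum]
          exact Finset.sum_congr rfl fun w _ => by ring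
        rw [Finset.sum_congr rfl hin, ← Finset.sum_mul]
        ring
      have h2 : ∑ z, ∑ w, dp z * dm w * Q w y = δ * ∑ w, dm w * Q w y := by
        have hin : ∀ z ∈ Finset.univ, ∑ w, dp z * dm w * Q w y
            = dp z * ∑ w, dm w * Q w y := by
          intro z _
          rw [Finset.mul_sum]
          exact Finset.sum_congr rfl fun w _ => by ring
        rw [Finset.sum_congr rfl hin, ← Finset.sum_mul, ← hδ]
      have h3 : ∑ z, ∑ w, dp z * dm w * (Q z y - Q w y)
          = ∑ z, ∑ w, dp z * dm w * Q z y - ∑ z, ∑ w, dp z * dm w * Q w y := by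
        rw [← Finset.sum_sub_distrib]
        refine Finset.sum_congr rfl fun z _ => ?_
        rw [← Finset.sum_sub_distrib]
        exact Finset.sum_congr rfl fun w _ => by ring
      rw [h3, h1, h2]
      have h4 : ∑ z, μ z * Q z y - ∑ z, ν z * Q z y = ∑ z, d z * Q z y := by
        rw [← Finset.sum_sub_distrib]
        exact Finset.sum_congr rfl fun z _ => by simp only [hd]; ring
      have h5 : ∑ z, d z * Q z y = ∑ z, dp z * Q z y - ∑ z, dm z * Q z y := by
        rw [← Finset.sum_sub_distrib]
        refine Finset.sum_congr rfl fun z _ => ?_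
        rw [hsub z]; ring
      rw [h4, h5]
      ring
    have hbound : δ * ∑ y, |∑ z, μ z * Q z y - ∑ z, ν z * Q z y| ≤ δ * (2 * (δ * D)) := by
      calc δ * ∑ y, |∑ z, μ z * Q z y - ∑ z, ν z * Q z y|
          = ∑ y, |δ * (∑ z, μ z * Q z y - ∑ z, ν z * Q z y)| := by
            rw [Finset.mul_sum]
            exact Finset.sum_congr rfl fun y _ => by
              rw [abs_mul, abs_of_nonneg hδ0]
        _ = ∑ y, |∑ z, ∑ w, dp z * dm w * (Q z y - Q w y)| :=
            Finset.sum_congr rfl fun y _ => by rw [hkey y]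
        _ ≤ ∑ y, ∑ z, ∑ w, dp z * dm w * |Q z y - Q w y| := by
            refine Finset.sum_le_sum fun y _ => ?_
            refine le_trans (Finset.abs_sum_le_sum_abs _ _) ?_
            refine Finset.sum_le_sum fun z _ => ?_
            refine le_trans (Finset.abs_sum_le_sum_abs _ _) ?_
            refine le_of_eq (Finset.sum_congr rfl fun w _ => ?_)
            rw [abs_mul, abs_of_nonneg (mul_nonneg (hdp0 z) (hdm0 w))]
        _ = ∑ z, ∑ w, dp z * dm w * ∑ y, |Q z y - Q w y| := by
            rw [Finset.sum_comm]
            refine Finset.sum_congr rfl fun z _ => ?_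
            rw [Finset.sum_comm]
            refine Finset.sum_congr rfl fun w _ => ?_
            rw [Finset.mul_sum]
        _ ≤ ∑ z, ∑ w, dp z * dm w * (2 * D) := by
            refine Finset.sum_le_sum fun z _ => Finset.sum_le_sum fun w _ => ?_
            refine mul_le_mul_of_nonneg_left ?_ (mul_nonneg (hdp0 z) (hdm0 w))
            have := hD z w
            unfold tv at this
            linarith
        _ = δ * (2 * (δ * D)) := by
            have : ∀ z ∈ Finset.univ, ∑ w, dp z * dm w * (2 * D) = dp z * (δ * (2 * D)) := by
              intro z _
              rw [← hδm, Finset.sum_mul, Finset.mul_sum]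
              exact Finset.sum_congr rfl fun w _ => by ring
            rw [Finset.sum_congr rfl this, ← Finset.sum_mul, ← hδ]
            ring
    rw [htv]
    unfold tv
    have h6 : ∑ y, |∑ z, μ z * Q z y - ∑ z, ν z * Q z y| ≤ 2 * (δ * D) :=
      le_of_mul_le_mul_left (by linarith [hbound]) hδpos
    have h7 : ∀ y, (fun y => ∑ z, μ z * Q z y) y - (fun y => ∑ z, ν z * Q z y) y
        = ∑ z, μ z * Q z y - ∑ z, ν z * Q z y := fun y => rfl
    simp only [h7]
    linarith

end tvlemmas

section main
variable {S : Type*} [Fintype S] [DecidableEq S] [Nonempty S]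
variable {P : Matrix S S ℝ}

lemma tv_le_dbar (t : ℕ) (x y : S) :
    tv (lawAt P (geo t) x) (lawAt P (geo t) y) ≤ dbarG P t := by
  unfold dbarG
  refine le_trans (le_ciSup (f := fun y' => tv (lawAt P (geo t) x) (lawAt P (geo t) y'))
    (Set.Finite.bddAbove (Set.finite_range _)) y) ?_
  exact le_ciSup (f := fun x' => ⨆ y', tv (lawAt P (geo t) x') (lawAt P (geo t) y'))
    (Set.Finite.bddAbove (Set.finite_range _)) x

lemma dbar_le (t : ℕ) (c : ℝ)
    (h : ∀ x y : S, tv (lawAt P (geo t) x) (lawAt P (geo t) y) ≤ c) :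
    dbarG P t ≤ c :=
  ciSup_le fun x => ciSup_le fun y => h x y

lemma dbar_nonneg (t : ℕ) : 0 ≤ dbarG P t := by
  have x0 : S := Classical.arbitrary S
  exact le_trans (tv_nonneg _ _) (tv_le_dbar t x0 x0)

variable (hP0 : ∀ x y, 0 ≤ P x y) (hP1 : ∀ x, ∑ y, P x y = 1)
include hP0 hP1

lemma dbar_le_one (t : ℕ) (ht : 1 ≤ t) : dbarG P t ≤ 1 :=
  dbar_le t 1 fun x y =>
    tv_le_one _ _ (law_nonneg hP0 hP1 ht x) (law_rowsum hP0 hP1 ht x)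
      (law_nonneg hP0 hP1 ht y) (law_rowsum hP0 hP1 ht y)

lemma step_ineq (t : ℕ) (ht : 1 ≤ t) :
    dbarG P (2*t) ≤ (1/2) * dbarG P t * (1 + dbarG P t) := by
  have ht2 : 1 ≤ 2*t := by omega
  have hd10 : 0 ≤ dbarG P t := dbar_nonneg t
  have hd20 : 0 ≤ dbarG P (2*t) := dbar_nonneg (2*t)
  have hd11 : dbarG P t ≤ 1 := dbar_le_one hP0 hP1 t ht
  set d1 := dbarG P t with hd1def
  set d2 := dbarG P (2*t) with hd2def
  have hmain : d2 ≤ (1/2) * d1 + (1/2) * (d1 * d2) := by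
    refine dbar_le (2*t) _ fun x y => ?_
    have hx : lawAt P (geo (2*t)) x = fun y' => (1/2) * lawAt P (geo t) x y'
        + (1/2) * ∑ z, lawAt P (geo t) x z * lawAt P (geo (2*t)) z y' :=
      funext fun y' => key_identity hP0 hP1 ht x y'
    have hy : lawAt P (geo (2*t)) y = fun y' => (1/2) * lawAt P (geo t) y y'
        + (1/2) * ∑ z, lawAt P (geo t) y z * lawAt P (geo (2*t)) z y' :=
      funext fun y' => key_identity hP0 hP1 ht y y'
    rw [hx, hy]
    refine le_trans (tv_mix _ _ _ _) ?_
    have h1 : tv (lawAt P (geo t) x) (lawAt P (geo t) y) ≤ d1 := tv_le_dbar t x y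
    have h2 : tv (fun y' => ∑ z, lawAt P (geo t) x z * lawAt P (geo (2*t)) z y')
        (fun y' => ∑ z, lawAt P (geo t) y z * lawAt P (geo (2*t)) z y')
        ≤ tv (lawAt P (geo t) x) (lawAt P (geo t) y) * d2 := by
      refine tv_matmul _ _ ?_ _ d2 fun z w => tv_le_dbar (2*t) z w
      rw [law_rowsum hP0 hP1 ht x, law_rowsum hP0 hP1 ht y]
    have h3 : tv (lawAt P (geo t) x) (lawAt P (geo t) y) * d2 ≤ d1 * d2 :=
      mul_le_mul_of_nonneg_right h1 hd20
    linarith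
  have hA : d1 * d2 ≤ d2 := by nlinarith
  have hd21 : d2 ≤ d1 := by linarith
  have hB : d1 * d2 ≤ d1 * d1 := mul_le_mul_of_nonneg_left hd21 hd10
  nlinarith

end main

/-- quasi-submultiplicativity: for a finite irreducible chain,
`d̄_G(2t) ≤ (1/2)·d̄_G(t)·(1 + d̄_G(t))`; consequently, if `d̄_G(t) ≤ β < 1`, then
`d̄_G(2^k t) ≤ ((1+β)/2)^k · d̄_G(t)` for all `k`. -/
theorem claim_submult {S : Type*} [Fintype S] [DecidableEq S] [Nonempty S]
    (P : Matrix S S ℝ)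
    (hP0 : ∀ x y, 0 ≤ P x y) (hP1 : ∀ x, ∑ y, P x y = 1)
    (hirr : ∀ x y, ∃ n, 0 < (P ^ n) x y)
    (t : ℕ) (ht : 1 ≤ t) :
    dbarG P (2 * t) ≤ (1 / 2) * dbarG P t * (1 + dbarG P t) ∧
    ∀ β : ℝ, β < 1 → dbarG P t ≤ β →
      ∀ k : ℕ, dbarG P (2 ^ k * t) ≤ ((1 + β) / 2) ^ k * dbarG P t := by

  refine ⟨step_ineq hP0 hP1 t ht, ?_⟩
  intro β hβ1 hβt k
  have hβ0 : (0:ℝ) ≤ β := le_trans (dbar_nonneg t) hβt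
  induction k with
  | zero => simp
  | succ k ih =>
    have h2k : 1 ≤ 2^k * t := Nat.one_le_iff_ne_zero.mpr (by positivity)
    have hstep := step_ineq hP0 hP1 (2^k * t) h2k
    have heq : 2^(k+1) * t = 2 * (2^k * t) := by ring
    rw [heq]
    have hdk0 : 0 ≤ dbarG P (2^k * t) := dbar_nonneg _
    have hpow1 : ((1+β)/2)^k ≤ 1 := pow_le_one₀ (by linarith) (by linarith)
    have hdkβ : dbarG P (2^k * t) ≤ β := by
      refine le_trans ih ?_
      calc ((1+β)/2)^k * dbarG P t ≤ 1 * β :=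
            mul_le_mul hpow1 hβt (dbar_nonneg t) (by norm_num)
        _ = β := one_mul β
    calc dbarG P (2 * (2^k * t))
        ≤ (1/2) * dbarG P (2^k * t) * (1 + dbarG P (2^k * t)) := hstep
      _ ≤ (1/2) * dbarG P (2^k * t) * (1 + β) := by
          refine mul_le_mul_of_nonneg_left (by linarith) (by linarith)
      _ = ((1+β)/2) * dbarG P (2^k * t) := by ring
      _ ≤ ((1+β)/2) * (((1+β)/2)^k * dbarG P t) :=
          mul_le_mul_of_nonneg_left ih (by linarith)
      _ = ((1+β)/2)^(k+1) * dbarG P t := by ring
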